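/- Let Δ be the Laplacian on the flat 1-torus 𝕋 (acting on L²(𝕋)). There exists a positive function f ∈ L¹(𝕋) (for instance f(t) = 1/(|t| |log|t||^{3/2}) on 𝕋 ≅ [−1/2,1/2] with endpoints identified) such that the densely defined operator (1+Δ)^{-1/4} M_f (1+Δ)^{-1/4} does not extend to a Hilbert–Schmidt operator on L²(𝕋); equivalently, M_{√f} (1+Δ)^{-1/2} M_{√f} is not Hilbert–Schmidt. -/

import Mathlib

open MeasureTheory Filter Topology ComplexConjugate
open scoped ENNReal NNReal InnerProductSpace RealInnerProductSpace

noncomputable section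

namespace NCG

variable {H : Type*} [NormedAddCommGroup H] [InnerProductSpace ℂ H] [CompleteSpace H]

/-- `sv T n` : the `n`-th approximation number of `T`; for compact `T` this is the
`(n+1)`-st singular value `μ_{n+1}(T)` of the paper. -/
def sv (T : H →L[ℂ] H) (n : ℕ) : ℝ :=
  sInf { c | ∃ S : H →L[ℂ] H, Module.rank ℂ (LinearMap.range (S : H →ₗ[ℂ] H)) ≤ n ∧ c = ‖T - S‖ }

/-- `gam T k = (log (1+(k+1)))⁻¹ * ∑_{n=1}^{k+1} μ_n(T)` : the sequence `γ(T)` of the paper,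
with the `0`-indexing `gam T k = γ(T)_{k+1}`. -/
def gam (T : H →L[ℂ] H) (k : ℕ) : ℝ :=
  (Real.log ((k : ℝ) + 2))⁻¹ * ∑ n ∈ Finset.range (k + 1), sv T n

/-- membership in the ideal `𝓛^{1,∞}`. -/
def MemL1Inf (T : H →L[ℂ] H) : Prop :=
  IsCompactOperator T ∧ BddAbove (Set.range (gam T))

/-- the norm `‖T‖_{1,∞}`. -/
def norm1Inf (T : H →L[ℂ] H) : ℝ := ⨆ k, gam T k

/-- membership in `𝓛^{1,∞}_0`, i.e. `limsup_k γ(T)_k = 0`. -/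
def MemL1Inf0 (T : H →L[ℂ] H) : Prop :=
  IsCompactOperator T ∧ Tendsto (gam T) atTop (𝓝 0)

/-- the seminorm `‖T‖₀ = inf { ‖T - V‖_{1,∞} : V ∈ 𝓛^{1,∞}_0 }`. -/
def norm0 (T : H →L[ℂ] H) : ℝ :=
  sInf { c | ∃ V : H →L[ℂ] H, MemL1Inf0 V ∧ c = norm1Inf (T - V) }

/-- trace class operators `𝓛¹`. -/
def MemTraceClass (T : H →L[ℂ] H) : Prop :=
  IsCompactOperator T ∧ Summable (sv T)

/-- the Schatten class `𝓛^p`. -/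
def MemSchatten (p : ℝ) (T : H →L[ℂ] H) : Prop :=
  IsCompactOperator T ∧ Summable (fun n => sv T n ^ p)

/-- `zeta T s = Tr(|T|^s) = ∑_n μ_n(T)^s`. -/
def zeta (T : H →L[ℂ] H) (s : ℝ) : ℝ := ∑' n, sv T n ^ s

/-- `‖T‖_{Z₁} = limsup_{s→1⁺} (s-1) (Tr |T|^s)^{1/s}`. -/
def normZ1 (T : H →L[ℂ] H) : ℝ :=
  limsup (fun s : ℝ => (s - 1) * zeta T s ^ (1 / s)) (𝓝[>] (1 : ℝ))

/-- a bounded sequence (i.e. an element of `ℓ^∞`). -/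
def Bdd (a : ℕ → ℝ) : Prop := ∃ C, ∀ k, |a k| ≤ C

/-- A generalized limit: a state on `ℓ^∞` squeezed between `liminf` and `limsup` on
(bounded) positive sequences.  We realise functionals on `ℓ^∞` as linear functionals on the
space of all sequences; only their values on bounded sequences are ever used. -/
def IsGenLim (ω : (ℕ → ℝ) →ₗ[ℝ] ℝ) : Prop :=
  (ω fun _ => 1) = 1 ∧
  ∀ a : ℕ → ℝ, (∀ k, 0 ≤ a k) → Bdd a →
    liminf a atTop ≤ ω a ∧ ω a ≤ limsup a atTop

/-- A Banach limit: a shift-invariant generalized limit (the class `BL`). -/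
def IsBanachLim (ω : (ℕ → ℝ) →ₗ[ℝ] ℝ) : Prop :=
  IsGenLim ω ∧ ∀ a : ℕ → ℝ, Bdd a → ∀ j : ℕ, (ω fun k => a (k + j)) = ω a

/-- A dilation-invariant generalized limit (the class `DL`);
in the `0`-indexed picture `(D_j a)_k = a_{⌈(k+1)/j⌉ - 1} = a_{k / j}` (ℕ-division). -/
def IsDilLim (ω : (ℕ → ℝ) →ₗ[ℝ] ℝ) : Prop :=
  IsGenLim ω ∧ ∀ a : ℕ → ℝ, Bdd a → ∀ j : ℕ, 1 ≤ j → (ω fun k => a (k / j)) = ω a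

/-- The class `DL₂` (relative to the Hilbert space `H`): generalized limits that are invariant
under the dilation `D₂` on the sequences `γ(T)`, `0 ≤ T ∈ 𝓛^{1,∞}`. -/
def IsDL2 (H : Type*) [NormedAddCommGroup H] [InnerProductSpace ℂ H] [CompleteSpace H]
    (ω : (ℕ → ℝ) →ₗ[ℝ] ℝ) : Prop :=
  IsGenLim ω ∧
  ∀ T : H →L[ℂ] H, T.IsPositive → MemL1Inf T →
    (ω fun k => gam T (k / 2)) = ω (gam T)

/-- `Φ` is (an extension to `B(H)` of) the Dixmier trace `Tr_ω`: a linear functional agreeing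
with `T ↦ ω(γ(T))` on positive elements of `𝓛^{1,∞}`.  Any such `Φ` agrees with `Tr_ω` on all
of `𝓛^{1,∞}`. -/
def IsDixTr (ω : (ℕ → ℝ) →ₗ[ℝ] ℝ) (Φ : (H →L[ℂ] H) →ₗ[ℂ] ℂ) : Prop :=
  ∀ T : H →L[ℂ] H, T.IsPositive → MemL1Inf T → Φ T = (ω (gam T) : ℂ)

/-- `T` is measurable in the sense of Connes (`T` positive case). -/
def ConnesMeasurable (T : H →L[ℂ] H) : Prop :=
  ∃ c : ℝ, ∀ ω : (ℕ → ℝ) →ₗ[ℝ] ℝ, IsDL2 H ω → ω (gam T) = c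

/-- The transform `𝓛(ω) = ω ∘ E ∘ L⁻¹ ∘ p` of the paper, in the `0`-indexed picture:
`(E(L⁻¹(p(a))))_{k+1} = ∫_k^{k+1} a_{⌊e^t⌋} dt`. -/
def LTrans (a : ℕ → ℝ) : ℕ → ℝ := fun k => ∫ t in (k : ℝ)..((k : ℝ) + 1), a (⌊Real.exp t⌋₊ - 1)


instance : Fact ((0 : ℝ) < 1) := ⟨one_pos⟩

section Statement3Aux

abbrev T1 := AddCircle (1 : ℝ)

lemma norm_fourier_apply (k : ℤ) (x : T1) : ‖fourier k x‖ = 1 := Circle.norm_coe _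

lemma contInt {E : Type*} [NormedAddCommGroup E] {g : T1 → E} (hg : Continuous g) :
    Integrable g AddCircle.haarAddCircle := by
  rw [← MeasureTheory.integrableOn_univ]
  exact hg.continuousOn.integrableOn_compact isCompact_univ

lemma integral_fourier (k : ℤ) :
    (∫ x : T1, fourier k x ∂AddCircle.haarAddCircle) = if k = 0 then 1 else 0 := by
  split_ifs with h
  · subst h
    simp only [fourier_zero]
    simp
  · exact MeasureTheory.integral_eq_zero_of_add_right_eq_neg
      (fourier_add_half_inv_index h one_pos)

/-- Fejér kernel. -/
def Fj (N : ℕ) (x : T1) : ℝ := ‖∑ m ∈ Finset.range N, fourier (m : ℤ) x‖ ^ 2 / N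

lemma Fj_nonneg (N : ℕ) (x : T1) : 0 ≤ Fj N x :=
  div_nonneg (by positivity) (Nat.cast_nonneg N)

lemma Fj_cont (N : ℕ) : Continuous (Fj N) := by
  have h : Continuous fun x : T1 => ∑ m ∈ Finset.range N, fourier (m : ℤ) x :=
    continuous_finset_sum _ fun m _ => map_continuous _
  exact (h.norm.pow 2).div_const _

def cnt (N : ℕ) (j : ℤ) : ℕ :=
  ((Finset.range N ×ˢ Finset.range N).filter fun p => (p.1 : ℤ) - (p.2 : ℤ) = j).card

lemma cnt_le (N : ℕ) (j : ℤ) : cnt N j ≤ N := by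
  classical
  have h := Finset.card_le_card_of_injOn (f := Prod.snd)
    (s := (Finset.range N ×ˢ Finset.range N).filter fun p => (p.1 : ℤ) - (p.2 : ℤ) = j)
    (t := Finset.range N) ?_ ?_
  · simpa [cnt] using h
  · intro p hp
    simp only [Finset.mem_coe, Finset.mem_filter, Finset.mem_product] at hp
    exact hp.1.2
  · intro p hp q hq hpq
    simp only [Finset.coe_filter, Set.mem_setOf_eq, Finset.mem_product] at hp hq
    obtain ⟨⟨-, -⟩, hp2⟩ := hp
    obtain ⟨⟨-, -⟩, hq2⟩ := hq
    have : p.1 = q.1 := by omega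
    exact Prod.ext this hpq

lemma cnt_ge {N n : ℕ} (hn : n ≤ N) : N - n ≤ cnt N (n : ℤ) := by
  classical
  have h := Finset.card_le_card_of_injOn (f := fun m => (m + n, m))
    (s := Finset.range (N - n))
    (t := (Finset.range N ×ˢ Finset.range N).filter fun p => (p.1 : ℤ) - (p.2 : ℤ) = (n : ℤ))
    ?_ ?_
  · simpa [cnt] using h
  · intro m hm
    simp only [Finset.mem_coe, Finset.mem_range] at hm
    simp only [Finset.mem_coe, Finset.mem_filter, Finset.mem_product, Finset.mem_range]
    refine ⟨⟨by omega, by omega⟩, by push_cast; ring⟩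
  · intro a _ b _ hab
    simpa using congrArg Prod.snd hab


lemma integral_Fj {N : ℕ} (hN : 0 < N) (j : ℤ) :
    ∫ x : T1, (Fj N x : ℂ) * fourier (-j) x ∂AddCircle.haarAddCircle
      = (((cnt N j : ℝ) / N : ℝ) : ℂ) := by
  classical
  have hpt : ∀ x : T1, (Fj N x : ℂ) * fourier (-j) x
      = (N : ℂ)⁻¹ * ∑ m ∈ Finset.range N, ∑ m' ∈ Finset.range N,
          fourier ((m : ℤ) - (m' : ℤ) - j) x := by
    intro x
    set z := ∑ m ∈ Finset.range N, fourier (m : ℤ) x with hz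
    have hconj : (starRingEnd ℂ) z = ∑ m ∈ Finset.range N, fourier (-(m : ℤ)) x := by
      rw [hz, map_sum]
      exact Finset.sum_congr rfl fun m _ => fourier_neg.symm
    have h1 : ((Fj N x : ℝ) : ℂ) = (N : ℂ)⁻¹ * (z * (starRingEnd ℂ) z) := by
      rw [Complex.mul_conj]
      unfold Fj
      rw [Complex.normSq_eq_norm_sq]
      push_cast
      ring
    rw [h1, hconj, mul_assoc]
    congr 1
    rw [hz, Finset.sum_mul_sum, Finset.sum_mul]
    refine Finset.sum_congr rfl fun m _ => ?_
    rw [Finset.sum_mul]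
    refine Finset.sum_congr rfl fun m' _ => ?_
    have he : (m : ℤ) + -(m' : ℤ) + -j = (m : ℤ) - (m' : ℤ) - j := by ring
    rw [← fourier_add, ← fourier_add, he]
  rw [MeasureTheory.integral_congr_ae (Filter.Eventually.of_forall hpt)]
  rw [MeasureTheory.integral_const_mul]
  rw [MeasureTheory.integral_finset_sum _ (fun m _ => integrable_finset_sum _
    (fun m' _ => contInt (map_continuous _)))]
  have : ∀ m ∈ Finset.range N, ∫ x : T1, (∑ m' ∈ Finset.range N,
      fourier ((m : ℤ) - (m' : ℤ) - j) x) ∂AddCircle.haarAddCircle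
      = ∑ m' ∈ Finset.range N, if (m : ℤ) - (m' : ℤ) - j = 0 then (1:ℂ) else 0 := by
    intro m _
    rw [MeasureTheory.integral_finset_sum _ (fun m' _ => contInt (map_continuous _))]
    exact Finset.sum_congr rfl fun m' _ => integral_fourier _
  rw [Finset.sum_congr rfl this]
  have hcount : ∑ m ∈ Finset.range N, ∑ m' ∈ Finset.range N,
      (if (m : ℤ) - (m' : ℤ) - j = 0 then (1:ℂ) else 0) = (cnt N j : ℂ) := by
    rw [← Finset.sum_product']
    have : ∀ p ∈ Finset.range N ×ˢ Finset.range N,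
        (if (p.1 : ℤ) - (p.2 : ℤ) - j = 0 then (1:ℂ) else 0)
          = if (p.1 : ℤ) - (p.2 : ℤ) = j then (1:ℂ) else 0 := by
      intro p _
      congr 1
      simp [sub_eq_zero, sub_eq_iff_eq_add]
    rw [Finset.sum_congr rfl this, Finset.sum_boole]
    rfl
  rw [hcount]
  have hN' : (N : ℂ) ≠ 0 := Nat.cast_ne_zero.mpr hN.ne'
  push_cast
  field_simp

lemma integral_Fj_real {N : ℕ} (hN : 0 < N) :
    ∫ x : T1, Fj N x ∂AddCircle.haarAddCircle = (cnt N 0 : ℝ) / N := by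
  have h := integral_Fj hN 0
  rw [neg_zero] at h
  have h2 : ∀ x : T1, (Fj N x : ℂ) * fourier 0 x = ((Fj N x : ℝ) : ℂ) := by
    intro x; rw [fourier_zero, mul_one]
  rw [MeasureTheory.integral_congr_ae (Filter.Eventually.of_forall h2)] at h
  have h4 : (((cnt N 0 : ℝ) / N : ℝ) : ℂ) = (((cnt N 0 : ℝ) / N : ℝ) : ℂ) := rfl
  apply Complex.ofReal_injective
  rw [← h]
  exact (integral_ofReal (𝕜 := ℂ)).symm


def EE (i : ℕ) : ℕ := 2 ^ 2 ^ i
def NN (i : ℕ) : ℕ := 2 * EE (i + 1)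
def cc (i : ℕ) : ℝ := (Real.sqrt 2)⁻¹ ^ i

lemma one_le_EE (i : ℕ) : 1 ≤ EE i := Nat.one_le_two_pow
lemma NN_pos (i : ℕ) : 0 < NN i := by have := one_le_EE (i + 1); unfold NN; omega
lemma EE_succ (i : ℕ) : EE (i + 1) = EE i * 2 ^ 2 ^ i := by
  unfold EE; rw [← pow_add]; congr 1; rw [pow_succ]; ring
lemma EE_mono : Monotone EE := fun a b h =>
  Nat.pow_le_pow_right (by norm_num) (Nat.pow_le_pow_right (by norm_num) h)

lemma sqrt2_inv_lt_one : (Real.sqrt 2)⁻¹ < 1 := by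
  rw [inv_lt_one_iff₀]
  right
  have : (1 : ℝ) < 2 := one_lt_two
  nlinarith [Real.sq_sqrt (by norm_num : (2:ℝ) ≥ 0) , Real.sqrt_nonneg 2, Real.sqrt_pos.mpr (by norm_num : (0:ℝ) < 2)]

lemma sqrt2_inv_nonneg : 0 ≤ (Real.sqrt 2)⁻¹ := by positivity

lemma cc_pos (i : ℕ) : 0 < cc i := by
  have : 0 < (Real.sqrt 2)⁻¹ := inv_pos.mpr (Real.sqrt_pos.mpr (by norm_num))
  exact pow_pos this i

lemma cc_summable : Summable cc :=
  summable_geometric_of_lt_one sqrt2_inv_nonneg sqrt2_inv_lt_one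

lemma cc_sq (i : ℕ) : cc i ^ 2 = (1 / 2 : ℝ) ^ i := by
  unfold cc
  rw [← pow_mul, mul_comm i 2, pow_mul]
  congr 1
  rw [inv_pow, Real.sq_sqrt (by norm_num : (0:ℝ) ≤ 2)]
  norm_num

def ff : T1 → ℝ := fun x => 1 + ∑' i, cc i * Fj (NN i) x

lemma ff_pos (x : T1) : 0 < ff x :=
  add_pos_of_pos_of_nonneg one_pos
    (tsum_nonneg fun i => mul_nonneg (cc_pos i).le (Fj_nonneg _ _))

lemma measurable_tsum_nonneg {α : Type*} [MeasurableSpace α] {g : ℕ → α → ℝ}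
    (hme : ∀ i, Measurable (g i)) (h0 : ∀ i x, 0 ≤ g i x) :
    Measurable fun x => ∑' i, g i x := by
  have heq : (fun x => ∑' i, g i x)
      = fun x => ⨆ n, ∑ i ∈ Finset.range n, g i x := by
    funext x
    by_cases h : Summable fun i => g i x
    · have hmono : Monotone fun n => ∑ i ∈ Finset.range n, g i x := fun a b hab =>
        Finset.sum_le_sum_of_subset_of_nonneg (Finset.range_subset_range.mpr hab)
          (fun i _ _ => h0 i x)
      have hb : BddAbove (Set.range fun n => ∑ i ∈ Finset.range n, g i x) := by
        refine ⟨∑' i, g i x, ?_⟩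
        rintro _ ⟨n, rfl⟩
        exact Summable.sum_le_tsum _ (fun i _ => h0 i x) h
      exact tendsto_nhds_unique h.hasSum.tendsto_sum_nat (tendsto_atTop_ciSup hmono hb)
    · rw [tsum_eq_zero_of_not_summable h]
      have hnb : ¬ BddAbove (Set.range fun n => ∑ i ∈ Finset.range n, g i x) := by
        intro ⟨c, hc⟩
        exact h (summable_of_sum_range_le (fun i => h0 i x)
          (fun n => hc ⟨n, rfl⟩))
      exact (Real.iSup_of_not_bddAbove hnb).symm
  rw [heq]
  exact Measurable.iSup fun n => Finset.measurable_sum _ fun i _ => hme i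

lemma ofReal_tsum_le {g : ℕ → ℝ} (h0 : ∀ i, 0 ≤ g i) :
    ENNReal.ofReal (∑' i, g i) ≤ ∑' i, ENNReal.ofReal (g i) := by
  by_cases h : Summable g
  · rw [ENNReal.ofReal_tsum_of_nonneg h0 h]
  · rw [tsum_eq_zero_of_not_summable h]
    simp

lemma lint_g (i : ℕ) :
    ∫⁻ x : T1, ENNReal.ofReal (cc i * Fj (NN i) x) ∂AddCircle.haarAddCircle
      ≤ ENNReal.ofReal (cc i) := by
  have hint : Integrable (fun x : T1 => cc i * Fj (NN i) x) AddCircle.haarAddCircle :=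
    contInt ((continuous_const.mul (Fj_cont (NN i))))
  rw [← MeasureTheory.ofReal_integral_eq_lintegral_ofReal hint
    (Filter.Eventually.of_forall fun x => mul_nonneg (cc_pos i).le (Fj_nonneg _ _))]
  apply ENNReal.ofReal_le_ofReal
  rw [MeasureTheory.integral_const_mul, integral_Fj_real (NN_pos i)]
  have h1 : (cnt (NN i) 0 : ℝ) / (NN i) ≤ 1 := by
    rw [div_le_one (by exact_mod_cast NN_pos i)]
    exact_mod_cast cnt_le (NN i) 0
  nlinarith [cc_pos i]

lemma measurable_tsum_ff : Measurable fun x : T1 => ∑' i, cc i * Fj (NN i) x :=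
  measurable_tsum_nonneg (fun i => ((Fj_cont (NN i)).measurable.const_mul _))
    (fun i x => mul_nonneg (cc_pos i).le (Fj_nonneg _ _))

lemma sum_ofReal_cc_ne_top : ∑' i, ENNReal.ofReal (cc i) ≠ ⊤ := by
  rw [← ENNReal.ofReal_tsum_of_nonneg (fun i => (cc_pos i).le) cc_summable]
  exact ENNReal.ofReal_ne_top

lemma integrable_ff : Integrable ff AddCircle.haarAddCircle := by
  refine ⟨((measurable_const.add measurable_tsum_ff)).aestronglyMeasurable, ?_⟩
  rw [MeasureTheory.hasFiniteIntegral_iff_ofReal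
    (Filter.Eventually.of_forall fun x => (ff_pos x).le)]
  calc ∫⁻ x : T1, ENNReal.ofReal (ff x) ∂AddCircle.haarAddCircle
      ≤ ∫⁻ x : T1, (1 + ∑' i, ENNReal.ofReal (cc i * Fj (NN i) x))
          ∂AddCircle.haarAddCircle := by
        apply MeasureTheory.lintegral_mono
        intro x
        unfold ff
        refine le_trans ENNReal.ofReal_add_le (add_le_add ?_ ?_)
        · simp
        · exact ofReal_tsum_le fun i => mul_nonneg (cc_pos i).le (Fj_nonneg _ _)
    _ = 1 + ∑' i, ∫⁻ x : T1, ENNReal.ofReal (cc i * Fj (NN i) x)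
          ∂AddCircle.haarAddCircle := by
        rw [MeasureTheory.lintegral_add_left measurable_const,
          MeasureTheory.lintegral_tsum (fun i =>
            (((Fj_cont (NN i)).measurable.const_mul _).ennreal_ofReal).aemeasurable)]
        simp
    _ ≤ 1 + ∑' i, ENNReal.ofReal (cc i) := add_le_add_right (ENNReal.tsum_le_tsum lint_g) 1
    _ < ⊤ := by
        have := sum_ofReal_cc_ne_top
        exact ENNReal.add_lt_top.mpr ⟨ENNReal.one_lt_top, this.lt_top⟩


def fhat (j : ℤ) : ℝ :=
  (if j = 0 then 1 else 0) + ∑' i, cc i * ((cnt (NN i) j : ℝ) / (NN i))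

lemma term_nonneg (j : ℤ) (i : ℕ) : 0 ≤ cc i * ((cnt (NN i) j : ℝ) / (NN i)) := by
  have := (cc_pos i).le
  positivity

lemma term_le (j : ℤ) (i : ℕ) : cc i * ((cnt (NN i) j : ℝ) / (NN i)) ≤ cc i := by
  have h1 : (cnt (NN i) j : ℝ) / (NN i) ≤ 1 := by
    rw [div_le_one (by exact_mod_cast NN_pos i)]
    exact_mod_cast cnt_le (NN i) j
  nlinarith [cc_pos i, term_nonneg j i]

lemma summable_term (j : ℤ) :
    Summable fun i => cc i * ((cnt (NN i) j : ℝ) / (NN i)) :=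
  Summable.of_nonneg_of_le (term_nonneg j) (term_le j) cc_summable

lemma fhat_nonneg (j : ℤ) : 0 ≤ fhat j := by
  unfold fhat
  refine add_nonneg ?_ (tsum_nonneg (term_nonneg j))
  split_ifs <;> norm_num

lemma lint_norm (i : ℕ) (j : ℤ) :
    ∫⁻ x : T1, ‖((cc i * Fj (NN i) x : ℝ) : ℂ) * fourier (-j) x‖₊ ∂AddCircle.haarAddCircle
      ≤ ENNReal.ofReal (cc i) := by
  refine le_trans (le_of_eq (MeasureTheory.lintegral_congr fun x => ?_)) (lint_g i)
  rw [nnnorm_mul]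
  have h1 : ‖fourier (-j) x‖₊ = 1 := by
    ext
    exact norm_fourier_apply (-j) x
  rw [h1, mul_one]
  have h2 : ‖((cc i * Fj (NN i) x : ℝ) : ℂ)‖₊ = ‖(cc i * Fj (NN i) x : ℝ)‖₊ := by
    ext
    exact Complex.norm_real _
  rw [h2]
  exact Real.enorm_eq_ofReal (mul_nonneg (cc_pos i).le (Fj_nonneg _ _))

lemma integral_ff (j : ℤ) :
    ∫ x : T1, ((ff x : ℝ) : ℂ) * fourier (-j) x ∂AddCircle.haarAddCircle = ((fhat j : ℝ) : ℂ) := by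
  have hpt : ∀ x : T1, ((ff x : ℝ) : ℂ) * fourier (-j) x
      = fourier (-j) x + ∑' i, ((cc i * Fj (NN i) x : ℝ) : ℂ) * fourier (-j) x := by
    intro x
    unfold ff
    rw [Complex.ofReal_add, Complex.ofReal_one, add_mul, one_mul, Complex.ofReal_tsum,
      tsum_mul_right]
  have hint_f : Integrable (fun x : T1 => ((ff x : ℝ) : ℂ) * fourier (-j) x)
      AddCircle.haarAddCircle := by
    have h1 : Integrable (fun x : T1 => fourier (-j) x * ((ff x : ℝ) : ℂ))
        AddCircle.haarAddCircle :=
      MeasureTheory.Integrable.bdd_mul integrable_ff.ofReal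
        (map_continuous (fourier (-j))).aestronglyMeasurable
        (Filter.Eventually.of_forall fun x => le_of_eq (norm_fourier_apply (-j) x))
    exact h1.congr (Filter.Eventually.of_forall fun x => mul_comm _ _)
  have hint_e : Integrable (fun x : T1 => fourier (-j) x) AddCircle.haarAddCircle :=
    contInt (map_continuous _)
  have hint_t : Integrable
      (fun x : T1 => ∑' i, ((cc i * Fj (NN i) x : ℝ) : ℂ) * fourier (-j) x)
      AddCircle.haarAddCircle := by
    refine (hint_f.sub hint_e).congr (Filter.Eventually.of_forall fun x => ?_)
    simp only [Pi.sub_apply]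
    rw [hpt x]
    ring
  rw [MeasureTheory.integral_congr_ae (Filter.Eventually.of_forall hpt),
    MeasureTheory.integral_add hint_e hint_t,
    MeasureTheory.integral_tsum
      (fun i => (Continuous.aestronglyMeasurable (by
        exact (Complex.continuous_ofReal.comp
          (continuous_const.mul (Fj_cont (NN i)))).mul (map_continuous _))))
      (by
        refine ne_top_of_le_ne_top sum_ofReal_cc_ne_top ?_
        exact ENNReal.tsum_le_tsum fun i => lint_norm i j)]
  have hterm : ∀ i : ℕ, ∫ x : T1, ((cc i * Fj (NN i) x : ℝ) : ℂ) * fourier (-j) x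
      ∂AddCircle.haarAddCircle
      = ((cc i * ((cnt (NN i) j : ℝ) / (NN i)) : ℝ) : ℂ) := by
    intro i
    have : ∀ x : T1, ((cc i * Fj (NN i) x : ℝ) : ℂ) * fourier (-j) x
        = (cc i : ℂ) * ((Fj (NN i) x : ℝ) * fourier (-j) x) := by
      intro x
      push_cast
      ring
    rw [MeasureTheory.integral_congr_ae (Filter.Eventually.of_forall this),
      MeasureTheory.integral_const_mul, integral_Fj (NN_pos i)]
    push_cast
    ring
  rw [tsum_congr hterm, integral_fourier, ← Complex.ofReal_tsum]
  unfold fhat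
  rw [Complex.ofReal_add]
  simp only [neg_eq_zero]
  congr 1
  simp [apply_ite (fun r : ℝ => (r : ℂ))]

lemma fhat_ge {i n : ℕ} (h2 : n ≤ EE (i + 1)) : cc i / 2 ≤ fhat (n : ℤ) := by
  have hNE : (NN i : ℝ) = 2 * (EE (i + 1) : ℝ) := by
    unfold NN
    push_cast
    ring
  have hnN : n ≤ NN i := by
    unfold NN
    omega
  have hcnt : (NN i : ℝ) - n ≤ (cnt (NN i) (n : ℤ) : ℝ) := by
    have := cnt_ge hnN
    have h3 : ((NN i - n : ℕ) : ℝ) = (NN i : ℝ) - n := by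
      push_cast [Nat.cast_sub hnN]
      ring
    calc (NN i : ℝ) - n = ((NN i - n : ℕ) : ℝ) := h3.symm
      _ ≤ _ := by exact_mod_cast this
  have hNpos : (0 : ℝ) < (NN i : ℝ) := by exact_mod_cast NN_pos i
  have h4 : (1 : ℝ) / 2 ≤ (cnt (NN i) (n : ℤ) : ℝ) / (NN i) := by
    rw [le_div_iff₀ hNpos]
    have hn2 : (n : ℝ) ≤ (EE (i + 1) : ℝ) := by exact_mod_cast h2
    nlinarith
  have hterm : cc i / 2 ≤ cc i * ((cnt (NN i) (n : ℤ) : ℝ) / (NN i)) := by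
    nlinarith [cc_pos i]
  calc cc i / 2 ≤ cc i * ((cnt (NN i) (n : ℤ) : ℝ) / (NN i)) := hterm
    _ ≤ ∑' i', cc i' * ((cnt (NN i') (n : ℤ) : ℝ) / (NN i')) :=
        Summable.le_tsum (summable_term _) i (fun i' _ => term_nonneg _ _)
    _ ≤ fhat (n : ℤ) := by
        unfold fhat
        have : (0:ℝ) ≤ if (n : ℤ) = 0 then 1 else 0 := by split_ifs <;> norm_num
        linarith

lemma harmonic_double {n : ℕ} (hn : 1 ≤ n) :
    (1 : ℝ) / 2 ≤ ∑ j ∈ Finset.Ioc n (2 * n), (1 : ℝ) / (j : ℝ) := by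
  have hcard : (Finset.Ioc n (2 * n)).card = n := by
    rw [Nat.card_Ioc]
    omega
  have hb : ∀ j ∈ Finset.Ioc n (2 * n), (1 : ℝ) / (2 * n : ℝ) ≤ 1 / (j : ℝ) := by
    intro j hj
    obtain ⟨hj1, hj2⟩ := Finset.mem_Ioc.mp hj
    apply one_div_le_one_div_of_le
    · have h0 : 0 < j := lt_of_le_of_lt (Nat.zero_le n) hj1
      exact_mod_cast h0
    · exact_mod_cast hj2
  calc (1 : ℝ) / 2 = n * (1 / (2 * n : ℝ)) := by
        field_simp
    _ = ∑ _j ∈ Finset.Ioc n (2 * n), (1 : ℝ) / (2 * n : ℝ) := by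
        rw [Finset.sum_const, hcard, nsmul_eq_mul]
    _ ≤ _ := Finset.sum_le_sum hb

lemma harmonic_pow (n : ℕ) (hn : 1 ≤ n) :
    ∀ m : ℕ, (m : ℝ) / 2 ≤ ∑ j ∈ Finset.Ioc n (n * 2 ^ m), (1 : ℝ) / (j : ℝ) := by
  intro m
  induction m with
  | zero => simp
  | succ m ih =>
    have h1 : n ≤ n * 2 ^ m := Nat.le_mul_of_pos_right _ (Nat.two_pow_pos m)
    have h2 : n * 2 ^ m ≤ n * 2 ^ (m + 1) :=
      Nat.mul_le_mul_left _ (Nat.pow_le_pow_right (by norm_num) (by omega))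
    rw [← Finset.sum_Ioc_consecutive _ h1 h2]
    have heq : n * 2 ^ (m + 1) = 2 * (n * 2 ^ m) := by ring
    have hd := harmonic_double (n := n * 2 ^ m) (Nat.mul_pos (by omega) (Nat.two_pow_pos m))
    rw [heq]
    push_cast
    push_cast at ih
    linarith


end Statement3Aux

/-- The character `t ↦ e^{2πikt}` on the flat `1`-torus `𝕋 = ℝ/ℤ`, as an element of
`L²(𝕋, haarAddCircle)` (`haarAddCircle` is the normalized Haar probability measure). -/
def circleChar (k : ℤ) : Lp ℂ 2 (AddCircle.haarAddCircle (T := 1)) :=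
  ContinuousMap.toLp 2 (AddCircle.haarAddCircle (T := 1)) ℂ (fourier k)

/-- Lemma 6.3 of the paper: there is a positive `f ∈ L¹(𝕋)` — e.g.
`f(t) = 1/(|t| |log|t||^{3/2})` on `𝕋 ≅ [-1/2,1/2]` — such that the densely defined operator
`(1+Δ)^{-1/4} M_f (1+Δ)^{-1/4}` has no Hilbert–Schmidt extension: no Hilbert–Schmidt operator
`S` has matrix elements
`⟨e_j, S e_k⟩ = (1+4π²j²)^{-1/4} (1+4π²k²)^{-1/4} ∫ f(t) e^{2πi(k-j)t} dt`
in the Fourier basis `e_k(t) = e^{2πikt}`. -/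
theorem statement3 :
    ∃ f : AddCircle (1 : ℝ) → ℝ, (∀ x, 0 < f x) ∧
      Integrable f (AddCircle.haarAddCircle (T := 1)) ∧
      ¬ ∃ S : Lp ℂ 2 (AddCircle.haarAddCircle (T := 1)) →L[ℂ]
            Lp ℂ 2 (AddCircle.haarAddCircle (T := 1)),
          (Summable fun k : ℤ => ‖S (circleChar k)‖ ^ 2) ∧
          ∀ j k : ℤ, (inner ℂ (circleChar j) (S (circleChar k)) : ℂ) =
            (((1 + 4 * Real.pi ^ 2 * (j : ℝ) ^ 2) ^ (-(1 : ℝ) / 4) *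
              (1 + 4 * Real.pi ^ 2 * (k : ℝ) ^ 2) ^ (-(1 : ℝ) / 4) : ℝ) : ℂ) *
              ∫ x, ((f x : ℝ) : ℂ) * fourier (k - j) x ∂(AddCircle.haarAddCircle (T := 1)) := by
  refine ⟨ff, ff_pos, integrable_ff, ?_⟩
  rintro ⟨S, -, hS⟩
  set v := S (circleChar 0) with hv
  have hON : Orthonormal ℂ circleChar := orthonormal_fourier (T := 1)
  set g : ℕ → ℝ := fun n => ‖(inner ℂ (circleChar (n : ℤ)) v : ℂ)‖ ^ 2 with hg
  have hg0 : ∀ n, 0 ≤ g n := fun n => by positivity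
  -- the key pointwise lower bound
  have key : ∀ (i n : ℕ), 1 ≤ n → n ≤ EE (i + 1) →
      (1 / 2 : ℝ) ^ i / (28 * n) ≤ g n := by
    intro i n h1 h2
    have hn1 : (1 : ℝ) ≤ (n : ℝ) := by exact_mod_cast h1
    have hx : (0 : ℝ) < 1 + 4 * Real.pi ^ 2 * ((n : ℤ) : ℝ) ^ 2 := by positivity
    have hinner := hS (n : ℤ) 0
    rw [zero_sub] at hinner
    rw [integral_ff (n : ℤ)] at hinner
    have hA0 : ((1 : ℝ) + 4 * Real.pi ^ 2 * ((0 : ℤ) : ℝ) ^ 2) ^ (-(1 : ℝ) / 4) = 1 := by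
      norm_num
    rw [hA0, mul_one] at hinner
    set A : ℝ := (1 + 4 * Real.pi ^ 2 * ((n : ℤ) : ℝ) ^ 2) ^ (-(1 : ℝ) / 4) with hA
    have hAnn : 0 ≤ A := Real.rpow_nonneg hx.le _
    have hgn : g n = (A * fhat (n : ℤ)) ^ 2 := by
      rw [hg]
      dsimp only
      rw [hinner, ← Complex.ofReal_mul, Complex.norm_real, Real.norm_eq_abs, sq_abs]
    have hπ := Real.pi_lt_d2
    have hπ3 := Real.pi_gt_three
    have hpi2 : Real.pi ^ 2 < 10 := by nlinarith
    have hn2 : (1 : ℝ) ≤ (n : ℝ) ^ 2 := by nlinarith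
    have hle : 1 + 4 * Real.pi ^ 2 * ((n : ℤ) : ℝ) ^ 2 ≤ (7 * n) ^ 2 := by
      push_cast
      nlinarith [sq_nonneg (n : ℝ), mul_le_mul_of_nonneg_right hpi2.le (sq_nonneg (n : ℝ))]
    have hA2 : (1 : ℝ) / (7 * n) ≤ A ^ 2 := by
      have e1 : A ^ 2 = ((1 + 4 * Real.pi ^ 2 * ((n : ℤ) : ℝ) ^ 2) ^ ((1 : ℝ) / 2))⁻¹ := by
        rw [hA, ← Real.rpow_natCast (_ ^ (-(1 : ℝ) / 4)) 2, ← Real.rpow_mul hx.le,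
          ← Real.rpow_neg_one ((1 + 4 * Real.pi ^ 2 * ((n : ℤ) : ℝ) ^ 2) ^ ((1:ℝ)/2)),
          ← Real.rpow_mul hx.le]
        norm_num
      have e2 : (1 + 4 * Real.pi ^ 2 * ((n : ℤ) : ℝ) ^ 2) ^ ((1 : ℝ) / 2)
          = Real.sqrt (1 + 4 * Real.pi ^ 2 * ((n : ℤ) : ℝ) ^ 2) := by
        rw [Real.sqrt_eq_rpow]
      have hsq : Real.sqrt (1 + 4 * Real.pi ^ 2 * ((n : ℤ) : ℝ) ^ 2) ≤ 7 * n := by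
        calc Real.sqrt (1 + 4 * Real.pi ^ 2 * ((n : ℤ) : ℝ) ^ 2)
            ≤ Real.sqrt ((7 * n) ^ 2) := Real.sqrt_le_sqrt hle
          _ = 7 * n := Real.sqrt_sq (by positivity)
        
      rw [e1, e2, one_div]
      exact inv_anti₀ (Real.sqrt_pos.mpr hx) hsq
    have hf2 : cc i / 2 ≤ fhat (n : ℤ) := fhat_ge h2
    have hfsq : (cc i / 2) ^ 2 ≤ fhat (n : ℤ) ^ 2 :=
      pow_le_pow_left₀ (div_nonneg (cc_pos i).le (by norm_num)) hf2 2
    have hccsq : (cc i / 2) ^ 2 = (1 / 2 : ℝ) ^ i / 4 := by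
      rw [div_pow, cc_sq]
      norm_num
    rw [hgn, mul_pow]
    calc (1 / 2 : ℝ) ^ i / (28 * n) = (1 / (7 * n)) * ((1 / 2 : ℝ) ^ i / 4) := by
          field_simp
          ring
      _ ≤ A ^ 2 * fhat (n : ℤ) ^ 2 := by
          rw [← hccsq]
          exact mul_le_mul hA2 hfsq (by positivity) (sq_nonneg A)
  have bessel : ∀ F : Finset ℕ, ∑ n ∈ F, g n ≤ ‖v‖ ^ 2 := by
    intro F
    have h := hON.sum_inner_products_le
      (s := F.map ⟨(fun n : ℕ => (n : ℤ)), fun a b hab => by simpa using hab⟩) v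
    rwa [Finset.sum_map] at h
  have lower : ∀ I : ℕ, (I : ℝ) / 56 ≤ ∑ n ∈ Finset.Ioc (EE 0) (EE I), g n := by
    intro I
    induction I with
    | zero => simp
    | succ I ih =>
      have h1 : EE 0 ≤ EE I := EE_mono (Nat.zero_le I)
      have h2 : EE I ≤ EE (I + 1) := EE_mono (Nat.le_succ I)
      rw [← Finset.sum_Ioc_consecutive _ h1 h2]
      have block : (1 : ℝ) / 56 ≤ ∑ n ∈ Finset.Ioc (EE I) (EE (I + 1)), g n := by
        have hb : ∀ n ∈ Finset.Ioc (EE I) (EE (I + 1)),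
            (1 / 2 : ℝ) ^ I / 28 * (1 / (n : ℝ)) ≤ g n := by
          intro n hn
          obtain ⟨hn1, hn2⟩ := Finset.mem_Ioc.mp hn
          have hn1' : 1 ≤ n := le_trans (one_le_EE I) hn1.le
          have hkey := key I n hn1' hn2
          have hnpos : (0 : ℝ) < (n : ℝ) := by
            have : 0 < n := hn1'
            exact_mod_cast this
          calc (1 / 2 : ℝ) ^ I / 28 * (1 / (n : ℝ)) = (1 / 2 : ℝ) ^ I / (28 * n) := by
                field_simp
            _ ≤ g n := hkey
        have hharm : ((2 : ℝ) ^ I) / 2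
            ≤ ∑ n ∈ Finset.Ioc (EE I) (EE (I + 1)), (1 / (n : ℝ)) := by
          have hh := harmonic_pow (EE I) (one_le_EE I) (2 ^ I)
          rw [← EE_succ] at hh
          exact_mod_cast hh
        have hpow : (1 / 2 : ℝ) ^ I * (2 : ℝ) ^ I = 1 := by
          rw [← mul_pow]
          norm_num
        calc (1 : ℝ) / 56 = (1 / 2 : ℝ) ^ I / 28 * ((2 : ℝ) ^ I / 2) := by
              rw [div_mul_div_comm, hpow]
              norm_num
          _ ≤ (1 / 2 : ℝ) ^ I / 28 * ∑ n ∈ Finset.Ioc (EE I) (EE (I + 1)), (1 / (n : ℝ)) :=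
              mul_le_mul_of_nonneg_left hharm (by positivity)
          _ = ∑ n ∈ Finset.Ioc (EE I) (EE (I + 1)), (1 / 2 : ℝ) ^ I / 28 * (1 / (n : ℝ)) :=
              Finset.mul_sum _ _ _
          _ ≤ ∑ n ∈ Finset.Ioc (EE I) (EE (I + 1)), g n := Finset.sum_le_sum hb
      push_cast
      linarith
  obtain ⟨I, hI⟩ := exists_nat_gt (56 * ‖v‖ ^ 2)
  have hcon := le_trans (lower I) (bessel _)
  rw [div_le_iff₀ (by norm_num : (0 : ℝ) < 56)] at hcon
  linarith


end NCG
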